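/- arXiv:1312.3019 — 3 statements merged into one kernel-verified Lean document; each statement's English description precedes it below -/
import Mathlib

section
/- Let Ω ⊂ ℝ³ be a bounded open set, p > 3, and let φ ∈ W^{1,p}(Ω, ℝ³) be continuous with det ∇φ(x) ≥ δ₀ > 0 a.e. and satisfy the Ciarlet–Nečas condition ∫_Ω det ∇φ dx ≤ |φ(Ω)|. Then N(φ, y) = 1 for a.e. y ∈ φ(Ω), where N(φ,y) is the number of preimages of y under φ in Ω. -/
open MeasureTheory
open scoped ENNReal

lemma my_sigma_meas {X : Type*} [TopologicalSpace X] [MeasurableSpace X] [BorelSpace X]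
    [T2Space X] {s : Set X} (hs : IsSigmaCompact s) : MeasurableSet s := by
  obtain ⟨K, hK, hU⟩ := hs
  rw [← hU]
  exact MeasurableSet.iUnion fun n => (hK n).measurableSet

lemma my_open_sigma {X : Type*} [TopologicalSpace X] [LocallyCompactSpace X]
    [SecondCountableTopology X] {U : Set X} (hU : IsOpen U) : IsSigmaCompact U := by
  have := hU.locallyCompactSpace
  exact isSigmaCompact_iff_sigmaCompactSpace.mpr inferInstance

/-- If `φ ∈ W^{1,p}(Ω, ℝ³)`, `p > 3`, is continuous with Jacobian
`det ∇φ ≥ δ₀ > 0` a.e. (so that the area formula with multiplicity function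
`N(φ,y) = #{x ∈ Ω : φ x = y}` holds) and satisfies the Ciarlet–Nečas condition
`∫_Ω det ∇φ ≤ |φ(Ω)|`, then `N(φ, y) = 1` for a.e. `y ∈ φ(Ω)`. -/
theorem injectivity_ae_of_ciarlet_necas
    (Ω : Set (Fin 3 → ℝ)) (hΩopen : IsOpen Ω) (hΩbd : Bornology.IsBounded Ω)
    (p : ℝ) (hp : 3 < p)
    (φ : (Fin 3 → ℝ) → (Fin 3 → ℝ)) (hφcont : ContinuousOn φ (closure Ω))
    (J : (Fin 3 → ℝ) → ℝ) (hJmeas : Measurable J)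
    (δ₀ : ℝ) (hδ₀ : 0 < δ₀) (hJ : ∀ᵐ x ∂(volume.restrict Ω), δ₀ ≤ J x)
    (N : (Fin 3 → ℝ) → ℝ≥0∞)
    (hN : ∀ y, N y = ({x | x ∈ Ω ∧ φ x = y}.encard : ℝ≥0∞))
    (area_formula : ∀ g : (Fin 3 → ℝ) → ℝ≥0∞, Measurable g →
      ∫⁻ y in φ '' Ω, N y * g y ∂volume
        = ∫⁻ x in Ω, g (φ x) * ENNReal.ofReal (J x) ∂volume)
    (ciarlet_necas : ∫⁻ x in Ω, ENNReal.ofReal (J x) ∂volume ≤ volume (φ '' Ω)) :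
    ∀ᵐ y ∂(volume.restrict (φ '' Ω)), N y = 1 := by
  classical
  have hφΩsc : IsSigmaCompact (φ '' Ω) :=
    (my_open_sigma hΩopen).image_of_continuousOn (hφcont.mono subset_closure)
  have hφΩm : MeasurableSet (φ '' Ω) := my_sigma_meas hφΩsc
  have hφΩfin : volume (φ '' Ω) < ⊤ := by
    have hcl : IsCompact (closure Ω) := hΩbd.isCompact_closure
    calc volume (φ '' Ω) ≤ volume (φ '' closure Ω) :=
          measure_mono (Set.image_mono subset_closure)
      _ < ⊤ := (hcl.image_of_continuousOn hφcont).measure_lt_top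
  -- the set of points with at least two preimages
  set S : Set (Fin 3 → ℝ) := {y | ∃ x₁ ∈ Ω, ∃ x₂ ∈ Ω, x₁ ≠ x₂ ∧ φ x₁ = y ∧ φ x₂ = y} with hSdef
  have hSsub : S ⊆ φ '' Ω := by
    rintro y ⟨x₁, hx₁, x₂, hx₂, hne, e1, e2⟩
    exact ⟨x₁, hx₁, e1⟩
  -- S is σ-compact, hence measurable
  have hSm : MeasurableSet S := by
    set U : Set ((Fin 3 → ℝ) × (Fin 3 → ℝ)) := (Ω ×ˢ Ω) ∩ {q | q.1 ≠ q.2} with hUdef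
    have hUopen : IsOpen U := (hΩopen.prod hΩopen).inter isClosed_diagonal.isOpen_compl
    set C : Set ((Fin 3 → ℝ) × (Fin 3 → ℝ)) := {q | φ q.1 = φ q.2} with hCdef
    obtain ⟨K, hKc, hKU⟩ := my_open_sigma hUopen
    have hKsub : ∀ n, K n ⊆ U := fun n => hKU ▸ Set.subset_iUnion K n
    have hfc : ∀ n, ContinuousOn (fun q : (Fin 3 → ℝ) × (Fin 3 → ℝ) => (φ q.1, φ q.2)) (K n) := by
      intro n
      have h1 : ContinuousOn (fun q : (Fin 3 → ℝ) × (Fin 3 → ℝ) => φ q.1) (K n) :=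
        hφcont.comp continuous_fst.continuousOn
          (fun q hq => subset_closure ((hKsub n hq).1).1)
      have h2 : ContinuousOn (fun q : (Fin 3 → ℝ) × (Fin 3 → ℝ) => φ q.2) (K n) :=
        hφcont.comp continuous_snd.continuousOn
          (fun q hq => subset_closure ((hKsub n hq).1).2)
      exact h1.prodMk h2
    have hKCc : ∀ n, IsCompact (K n ∩ C) := by
      intro n
      have hclosed : IsClosed (K n ∩ ((fun q : (Fin 3 → ℝ) × (Fin 3 → ℝ) => (φ q.1, φ q.2)) ⁻¹' Set.diagonal (Fin 3 → ℝ))) :=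
        (hfc n).preimage_isClosed_of_isClosed (hKc n).isClosed isClosed_diagonal
      have heq : K n ∩ ((fun q : (Fin 3 → ℝ) × (Fin 3 → ℝ) => (φ q.1, φ q.2)) ⁻¹' Set.diagonal (Fin 3 → ℝ)) = K n ∩ C := by
        ext q; simp [Set.diagonal, hCdef, eq_comm]
      rw [heq] at hclosed
      exact (hKc n).of_isClosed_subset hclosed Set.inter_subset_left
    have hTsc : IsSigmaCompact (U ∩ C) := by
      refine ⟨fun n => K n ∩ C, hKCc, ?_⟩
      rw [← Set.iUnion_inter, hKU]
    have hSeq : S = (fun q : (Fin 3 → ℝ) × (Fin 3 → ℝ) => φ q.1) '' (U ∩ C) := by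
      ext y
      constructor
      · rintro ⟨x₁, hx₁, x₂, hx₂, hne, e1, e2⟩
        exact ⟨(x₁, x₂), ⟨⟨⟨hx₁, hx₂⟩, hne⟩, e1.trans e2.symm⟩, e1⟩
      · rintro ⟨⟨x₁, x₂⟩, ⟨⟨⟨hx₁, hx₂⟩, hne⟩, heq⟩, rfl⟩
        exact ⟨x₁, hx₁, x₂, hx₂, hne, rfl, heq.symm⟩
    have hSsc : IsSigmaCompact S := by
      rw [hSeq]
      exact hTsc.image_of_continuousOn
        (hφcont.comp continuous_fst.continuousOn
          (fun q hq => subset_closure ((hq.1).1).1))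
    exact my_sigma_meas hSsc
  -- area formula with g = 1
  have key := area_formula 1 measurable_one
  simp only [Pi.one_apply, mul_one, one_mul] at key
  have h1 : ∫⁻ y in φ '' Ω, N y ∂volume ≤ volume (φ '' Ω) := key ▸ ciarlet_necas
  -- pointwise lower bound
  have hlow : ∀ y ∈ φ '' Ω, (1 : ℝ≥0∞) + S.indicator 1 y ≤ N y := by
    rintro y ⟨x, hxΩ, hxy⟩
    by_cases hyS : y ∈ S
    · obtain ⟨x₁, hx₁, x₂, hx₂, hne, e1, e2⟩ := id hyS
      have hsub : ({x₁, x₂} : Set (Fin 3 → ℝ)) ⊆ {x | x ∈ Ω ∧ φ x = y} := by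
        rintro a (rfl | rfl)
        · exact ⟨hx₁, e1⟩
        · exact ⟨hx₂, e2⟩
      have h2' : (2 : ℕ∞) ≤ ({x | x ∈ Ω ∧ φ x = y}).encard := by
        rw [← Set.encard_pair hne]
        exact Set.encard_mono hsub
      rw [hN, Set.indicator_of_mem hyS]
      calc (1 : ℝ≥0∞) + 1 = ((2 : ℕ∞) : ℝ≥0∞) := by
            rw [ENat.toENNReal_ofNat]; norm_num
        _ ≤ _ := ENat.toENNReal_le.mpr h2'
    · rw [Set.indicator_of_notMem hyS, add_zero, hN, ← ENat.toENNReal_one,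
        ENat.toENNReal_le, Set.one_le_encard_iff_nonempty]
      exact ⟨x, hxΩ, hxy⟩
  -- integral lower bound
  have h2 : volume (φ '' Ω) + volume S ≤ ∫⁻ y in φ '' Ω, N y ∂volume := by
    have hcalc : ∫⁻ y in φ '' Ω, ((1 : ℝ≥0∞) + S.indicator 1 y) ∂volume
        = volume (φ '' Ω) + volume S := by
      rw [lintegral_add_left measurable_const, setLIntegral_one,
        lintegral_indicator hSm]
      congr 1
      rw [Measure.restrict_restrict hSm]
      simp only [Pi.one_apply]
      rw [setLIntegral_one, Set.inter_eq_self_of_subset_left hSsub]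
    rw [← hcalc]
    exact setLIntegral_mono' hφΩm hlow
  have hS0 : volume S = 0 := by
    have h3 : volume (φ '' Ω) + volume S ≤ volume (φ '' Ω) + 0 := by
      rw [add_zero]; exact h2.trans h1
    exact le_antisymm ((ENNReal.add_le_add_iff_left hφΩfin.ne).mp h3) zero_le
  -- conclude
  rw [ae_iff, Measure.restrict_apply' hφΩm]
  refine measure_mono_null ?_ hS0
  rintro y ⟨hy1, hy2⟩
  simp only [Set.mem_setOf_eq] at hy1
  by_contra hyS
  apply hy1
  obtain ⟨x, hx, rfl⟩ := hy2
  rw [hN]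
  have hle : ({x' | x' ∈ Ω ∧ φ x' = φ x}).encard ≤ 1 := by
    rw [Set.encard_le_one_iff]
    rintro a b ⟨haΩ, hae⟩ ⟨hbΩ, hbe⟩
    by_contra hab
    exact hyS ⟨a, haΩ, b, hbΩ, hab, hae, hbe⟩
  have hge : (1 : ℕ∞) ≤ ({x' | x' ∈ Ω ∧ φ x' = φ x}).encard :=
    Set.one_le_encard_iff_nonempty.mpr ⟨x, hx, rfl⟩
  rw [le_antisymm hle hge, ENat.toENNReal_one]
end

section
/- Let Ω ⊂ ℝ³ be bounded open, and let φ_k, φ : Ω̄ → ℝ³ be continuous maps with φ_k → φ uniformly on Ω and |φ(∂Ω)| = 0. Then limsup_{k→∞} |φ_k(Ω)| ≤ |φ(Ω)|. -/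
open MeasureTheory Filter
open scoped ENNReal Topology

/-- If `φ_k → φ` uniformly on a bounded open `Ω ⊂ ℝ³`, the maps
being continuous on `Ω̄`, and `|φ(∂Ω)| = 0`, then
`limsup_k |φ_k(Ω)| ≤ |φ(Ω)|`. -/
theorem limsup_image_measure_le
    (Ω : Set (Fin 3 → ℝ)) (hΩopen : IsOpen Ω) (hΩbd : Bornology.IsBounded Ω)
    (φ : (Fin 3 → ℝ) → (Fin 3 → ℝ)) (φs : ℕ → (Fin 3 → ℝ) → (Fin 3 → ℝ))
    (hφcont : ContinuousOn φ (closure Ω))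
    (hφscont : ∀ k, ContinuousOn (φs k) (closure Ω))
    (hunif : TendstoUniformlyOn φs φ atTop Ω)
    (hbdry : volume (φ '' frontier Ω) = 0) :
    Filter.limsup (fun k => volume (φs k '' Ω)) atTop ≤ volume (φ '' Ω) := by
  set C := closure (φ '' Ω) with hC
  have hKcl : IsCompact (closure Ω) := hΩbd.isCompact_closure
  have hScomp : IsCompact (φ '' closure Ω) := hKcl.image_of_continuousOn hφcont
  have hCsub : C ⊆ φ '' closure Ω :=
    closure_minimal (Set.image_mono subset_closure) hScomp.isClosed
  have hCcomp : IsCompact C := hScomp.of_isClosed_subset isClosed_closure hCsub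
  -- measure of C is at most measure of φ '' Ω
  have hμC : volume C ≤ volume (φ '' Ω) := by
    have h1 : C ⊆ φ '' Ω ∪ φ '' frontier Ω := by
      intro y hy
      rcases hCsub hy with ⟨x, hx, rfl⟩
      have hx' : x ∈ Ω ∪ frontier Ω := by
        have h2 := closure_eq_interior_union_frontier Ω
        rw [hΩopen.interior_eq] at h2
        rw [← h2]; exact hx
      rcases hx' with h | h
      · exact Or.inl ⟨x, h, rfl⟩
      · exact Or.inr ⟨x, h, rfl⟩
    calc volume C ≤ volume (φ '' Ω ∪ φ '' frontier Ω) := measure_mono h1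
      _ ≤ volume (φ '' Ω) + volume (φ '' frontier Ω) := measure_union_le _ _
      _ = volume (φ '' Ω) := by rw [hbdry, add_zero]
  -- tendsto of cthickening measures
  have htend : Tendsto (fun r : ℝ => volume (Metric.cthickening r C)) (𝓝[>] 0)
      (𝓝 (volume C)) :=
    (tendsto_measure_cthickening_of_isCompact (μ := volume) hCcomp).mono_left
      nhdsWithin_le_nhds
  refine le_trans (ge_of_tendsto htend ?_) hμC
  filter_upwards [self_mem_nhdsWithin] with r (hr : 0 < r)
  -- limsup ≤ volume (cthickening r C)
  refine Filter.limsup_le_of_le (by isBoundedDefault) ?_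
  have := (Metric.tendstoUniformlyOn_iff.mp hunif) r hr
  filter_upwards [this] with k hk
  refine measure_mono ?_
  rintro y ⟨x, hx, rfl⟩
  refine Metric.thickening_subset_cthickening r C ?_
  rw [Metric.mem_thickening_iff]
  exact ⟨φ x, subset_closure ⟨x, hx, rfl⟩, by rw [dist_comm]; exact hk x hx⟩
end

section
/- Let Ω ⊂ ℝ³ be bounded open, p > 3, and suppose φ_k ⇀ φ weakly in W^{1,p}(Ω, ℝ³), each φ_k satisfies ∫_Ω det ∇φ_k dx ≤ |φ_k(Ω)|, and |φ(∂Ω)| = 0. Then φ also satisfies ∫_Ω det ∇φ dx ≤ |φ(Ω)|, i.e., the Ciarlet–Nečas condition is preserved under weak W^{1,p} convergence. -/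
open MeasureTheory Filter
open scoped ENNReal Topology

/-- The Ciarlet–Nečas condition is preserved under weak `W^{1,p}`
convergence (`p > 3`). Weak convergence is encoded through its consequences:
uniform convergence `φ_k → φ` on `Ω̄` (compact embedding into `C(Ω̄)`) and weak
convergence of the Jacobian determinants `J_k = det ∇φ_k ⇀ J = det ∇φ`
(weak continuity of null Lagrangians), tested against bounded measurable
functions. If each `φ_k` satisfies `∫_Ω J_k ≤ |φ_k(Ω)|` and `|φ(∂Ω)| = 0`,
then `∫_Ω J ≤ |φ(Ω)|`. -/
theorem ciarlet_necas_weakly_closed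
    (Ω : Set (Fin 3 → ℝ)) (hΩopen : IsOpen Ω) (hΩbd : Bornology.IsBounded Ω)
    (p : ℝ) (hp : 3 < p)
    (φ : (Fin 3 → ℝ) → (Fin 3 → ℝ)) (φs : ℕ → (Fin 3 → ℝ) → (Fin 3 → ℝ))
    (hφcont : ContinuousOn φ (closure Ω))
    (hφscont : ∀ k, ContinuousOn (φs k) (closure Ω))
    (J : (Fin 3 → ℝ) → ℝ) (Js : ℕ → (Fin 3 → ℝ) → ℝ)
    (hJmeas : Measurable J) (hJsmeas : ∀ k, Measurable (Js k))
    (hJint : IntegrableOn J Ω) (hJsint : ∀ k, IntegrableOn (Js k) Ω)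
    (hunif : TendstoUniformlyOn φs φ atTop (closure Ω))
    (hdetweak : ∀ w : (Fin 3 → ℝ) → ℝ, Measurable w → (∃ C, ∀ x, |w x| ≤ C) →
      Tendsto (fun k => ∫ x in Ω, Js k x * w x) atTop
        (𝓝 (∫ x in Ω, J x * w x)))
    (hbdry : volume (φ '' frontier Ω) = 0)
    (hCN : ∀ k, ∫ x in Ω, Js k x ≤ (volume (φs k '' Ω)).toReal) :
    ∫ x in Ω, J x ≤ (volume (φ '' Ω)).toReal := by
  -- integrals of Js converge to integral of J (test with w ≡ 1)
  have hInt : Tendsto (fun k => ∫ x in Ω, Js k x) atTop (𝓝 (∫ x in Ω, J x)) := by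
    have := hdetweak (fun _ => 1) measurable_const ⟨1, fun x => by norm_num⟩
    simpa using this
  -- the compact set K = φ(closure Ω)
  have hΩc : IsCompact (closure Ω) := hΩbd.isCompact_closure
  set K : Set (Fin 3 → ℝ) := φ '' closure Ω with hKdef
  have hKcpt : IsCompact K := hΩc.image_of_continuousOn hφcont
  -- volume K ≤ volume (φ '' Ω)
  have hKvol : volume K ≤ volume (φ '' Ω) := by
    have : K ⊆ φ '' Ω ∪ φ '' frontier Ω := by
      rw [hKdef, ← Set.image_union]
      apply Set.image_mono
      intro x hx
      rcases (em (x ∈ Ω)) with h | h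
      · exact Or.inl h
      · exact Or.inr ⟨hx, by rwa [hΩopen.interior_eq]⟩
    calc volume K ≤ volume (φ '' Ω ∪ φ '' frontier Ω) := measure_mono this
      _ ≤ volume (φ '' Ω) + volume (φ '' frontier Ω) := measure_union_le _ _
      _ = volume (φ '' Ω) := by rw [hbdry, add_zero]
  -- main bound: for every ε > 0, ∫ J ≤ volume (cthickening ε K)
  have hmain : ∀ ε : ℝ, 0 < ε →
      ∫ x in Ω, J x ≤ (volume (Metric.cthickening ε K)).toReal := by
    intro ε hε
    apply le_of_tendsto hInt
    filter_upwards [Metric.tendstoUniformlyOn_iff.1 hunif ε hε] with k hk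
    refine (hCN k).trans ?_
    have hsub : φs k '' Ω ⊆ Metric.cthickening ε K := by
      rintro _ ⟨x, hx, rfl⟩
      have hx' : x ∈ closure Ω := subset_closure hx
      have := hk x hx'
      apply Metric.thickening_subset_cthickening
      rw [Metric.mem_thickening_iff]
      exact ⟨φ x, ⟨x, hx', rfl⟩, by rwa [dist_comm]⟩
    exact ENNReal.toReal_mono
      (ne_of_lt (hKcpt.isBounded.cthickening.isCompact_closure.measure_lt_top.trans_le'
        (measure_mono subset_closure)))
      (measure_mono hsub)
  -- take ε → 0
  have hTend : Tendsto (fun ε : ℝ => (volume (Metric.cthickening ε K)).toReal)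
      (𝓝[>] 0) (𝓝 ((volume K).toReal)) := by
    exact (ENNReal.tendsto_toReal hKcpt.measure_lt_top.ne).comp
      ((tendsto_measure_cthickening_of_isCompact hKcpt).mono_left nhdsWithin_le_nhds)
  have hle : ∫ x in Ω, J x ≤ (volume K).toReal := by
    apply ge_of_tendsto hTend
    filter_upwards [self_mem_nhdsWithin] with ε (hε : 0 < ε)
    exact hmain ε hε
  refine hle.trans (ENNReal.toReal_mono ?_ hKvol)
  exact ((measure_mono (Set.image_mono (f := φ) subset_closure)).trans_lt
    hKcpt.measure_lt_top).ne
end
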